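/- Population unbiasedness of the APP score at the true coefficient under debiasing weights: Let (Ω,ℱ,P) be a probability space carrying: a bounded random vector X in ℝ^p with Σ := E[XXᵀ] invertible; positive real random variables T and C with Δ = 1{T ≤ C}, Y = min(T, C), and E[|log T|] < ∞; a measurable G : ℝ × ℝ^p → ℝ with δ ≤ G(T, X) ≤ 1 a.s. (δ > 0) and G(T, X) a version of E[Δ ∣ σ(T, X)]; and a treatment variable A ∈ {0, …, K} independent of X with κ := P(A = a) ∈ (0, 1) for a fixed a. Let β₀ := Σ⁻¹ E[X log T] be the population least-squares coefficient. Define the score ψ(β, f) := (XΔ / G(Y, X)) (log Y − Xᵀβ) + c₁ (1{A = a}/κ) X (f(X) − Xᵀβ) + c₂ (1{A ≠ a}/(1 − κ)) X (f(X) − Xᵀβ). Then for weights with c₁ + c₂ = 0 and for every bounded measurable f : ℝ^p → ℝ, E[ψ(β₀, f)] = 0. -/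

import Mathlib

open MeasureTheory ProbabilityTheory

/-- **Population unbiasedness of the APP score at the true coefficient under debiasing
weights.** With right-censored data `Δ = 1{T ≤ C}`, `Y = min(T, C)`, censoring mechanism `G`
(a version of `E[Δ ∣ σ(T, X)]`, bounded below by `δ > 0`), a bounded covariate vector `X` with
invertible second moment matrix `Σ = E[XXᵀ]`, a treatment `A` independent of `X` with
`κ = P(A = a) ∈ (0, 1)`, and population least-squares coefficient `β₀ = Σ⁻¹ E[X log T]`:
for all weights with `c₁ + c₂ = 0` and every bounded measurable `f`, the APP score
`ψ(β₀, f) = (XΔ/G(Y,X))(log Y − Xᵀβ₀) + c₁ (1{A=a}/κ) X (f(X) − Xᵀβ₀)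
   + c₂ (1{A≠a}/(1−κ)) X (f(X) − Xᵀβ₀)` has mean zero. -/
theorem app_score_unbiased_at_beta0
    {Ω : Type*} [MeasurableSpace Ω] (P : Measure Ω) [IsProbabilityMeasure P]
    {K p : ℕ} (X : Ω → (Fin p → ℝ)) (T C : Ω → ℝ) (A : Ω → Fin (K + 1))
    (hX : Measurable X) (hT : Measurable T) (hC : Measurable C) (hA : Measurable A)
    (M : ℝ) (hXbd : ∀ ω i, |X ω i| ≤ M)
    (hTpos : ∀ᵐ ω ∂P, 0 < T ω) (hCpos : ∀ᵐ ω ∂P, 0 < C ω)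
    (hlogT : Integrable (fun ω => Real.log (T ω)) P)
    (Δ : Ω → ℝ) (hΔ : ∀ ω, Δ ω = if T ω ≤ C ω then (1 : ℝ) else 0)
    (Y : Ω → ℝ) (hY : ∀ ω, Y ω = min (T ω) (C ω))
    (G : ℝ × (Fin p → ℝ) → ℝ) (hG : Measurable G)
    (δ : ℝ) (hδ : 0 < δ)
    (hGbound : ∀ᵐ ω ∂P, δ ≤ G (T ω, X ω) ∧ G (T ω, X ω) ≤ 1)
    (hGcond : (fun ω => G (T ω, X ω))
      =ᵐ[P] P[Δ | MeasurableSpace.comap (fun ω => (T ω, X ω)) inferInstance])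
    (hindep : IndepFun A X P)
    (a : Fin (K + 1)) (κ : ℝ) (hκ : κ = (P {ω | A ω = a}).toReal)
    (hκpos : 0 < κ) (hκlt : κ < 1)
    (Sig : Matrix (Fin p) (Fin p) ℝ) (hSig : ∀ i j, Sig i j = ∫ ω, X ω i * X ω j ∂P)
    (hSigInv : IsUnit Sig)
    (v : Fin p → ℝ) (hv : ∀ i, v i = ∫ ω, X ω i * Real.log (T ω) ∂P)
    (β₀ : Fin p → ℝ) (hβ₀ : β₀ = Sig⁻¹.mulVec v)
    (c₁ c₂ : ℝ) (hc : c₁ + c₂ = 0)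
    (f : (Fin p → ℝ) → ℝ) (hf : Measurable f) (Mf : ℝ) (hfbd : ∀ x, |f x| ≤ Mf) :
    ∫ ω, ((Δ ω / G (Y ω, X ω)) • ((Real.log (Y ω) - ∑ i, X ω i * β₀ i) • X ω)
          + (c₁ * (if A ω = a then (1 : ℝ) else 0) / κ) •
              ((f (X ω) - ∑ i, X ω i * β₀ i) • X ω)
          + (c₂ * (if A ω = a then (0 : ℝ) else 1) / (1 - κ)) •
              ((f (X ω) - ∑ i, X ω i * β₀ i) • X ω)) ∂P = 0 := by
  classical
  have hTX : Measurable (fun ω => (T ω, X ω)) := hT.prodMk hX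
  have hm : MeasurableSpace.comap (fun ω => (T ω, X ω)) inferInstance
      ≤ ‹MeasurableSpace Ω› := measurable_iff_comap_le.mp hTX
  haveI : SigmaFinite (P.trim hm) := inferInstance
  set M' : ℝ := max M 0 with hM'
  have hM'0 : (0 : ℝ) ≤ M' := le_max_right _ _
  have hXM' : ∀ ω i, |X ω i| ≤ M' := fun ω i => (hXbd ω i).trans (le_max_left _ _)
  -- βX measurability and bounds
  have hβXm : Measurable (fun ω => ∑ j, X ω j * β₀ j) :=
    Finset.measurable_sum _ fun j _ => ((measurable_pi_apply j).comp hX).mul_const _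
  set B : ℝ := M' * ∑ j, |β₀ j| with hBdef
  have hβXbd : ∀ ω, |∑ j, X ω j * β₀ j| ≤ B := by
    intro ω
    calc |∑ j, X ω j * β₀ j| ≤ ∑ j, |X ω j * β₀ j| := Finset.abs_sum_le_sum_abs _ _
      _ ≤ ∑ j, M' * |β₀ j| := Finset.sum_le_sum fun j _ => by
            rw [abs_mul]; exact mul_le_mul_of_nonneg_right (hXM' ω j) (abs_nonneg _)
      _ = B := by rw [hBdef, Finset.mul_sum]
  have hβXint : Integrable (fun ω => ∑ j, X ω j * β₀ j) P :=
    (integrable_const B).mono' hβXm.aestronglyMeasurable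
      (ae_of_all _ fun ω => by simpa [Real.norm_eq_abs] using hβXbd ω)
  -- r = log T - βX
  have hrm : Measurable (fun ω => Real.log (T ω) - ∑ j, X ω j * β₀ j) :=
    (Real.measurable_log.comp hT).sub hβXm
  have hrint : Integrable (fun ω => Real.log (T ω) - ∑ j, X ω j * β₀ j) P := hlogT.sub hβXint
  -- s = f(X) - βX
  have hsm : Measurable (fun ω => f (X ω) - ∑ j, X ω j * β₀ j) := (hf.comp hX).sub hβXm
  have hsbd : ∀ ω, |f (X ω) - ∑ j, X ω j * β₀ j| ≤ Mf + B := by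
    intro ω
    rw [sub_eq_add_neg]
    exact (abs_add_le _ _).trans (by rw [abs_neg]; exact add_le_add (hfbd _) (hβXbd ω))
  have hsint : Integrable (fun ω => f (X ω) - ∑ j, X ω j * β₀ j) P :=
    (integrable_const (Mf + B)).mono' hsm.aestronglyMeasurable
      (ae_of_all _ fun ω => by simpa [Real.norm_eq_abs] using hsbd ω)
  -- Δ
  have hΔm : Measurable Δ := by
    have hΔeq : Δ = fun ω => if T ω ≤ C ω then (1 : ℝ) else 0 := funext hΔ
    rw [hΔeq]
    exact Measurable.ite (measurableSet_le hT hC) measurable_const measurable_const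
  have hΔbd : ∀ ω, |Δ ω| ≤ 1 := fun ω => by rw [hΔ]; split <;> simp
  have hΔint : Integrable Δ P :=
    (integrable_const 1).mono' hΔm.aestronglyMeasurable
      (ae_of_all _ fun ω => by simpa [Real.norm_eq_abs] using hΔbd ω)
  have hGTXm : Measurable (fun ω => G (T ω, X ω)) := hG.comp hTX
  -- helper: integrability of g * X_i
  have hcomp : ∀ (g : Ω → ℝ), Measurable g → Integrable g P → ∀ i : Fin p,
      Integrable (fun ω => g ω * X ω i) P := by
    intro g hgm hgint i
    refine (hgint.abs.const_mul M').mono'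
      (hgm.mul ((measurable_pi_apply i).comp hX)).aestronglyMeasurable
      (ae_of_all _ fun ω => ?_)
    rw [Real.norm_eq_abs, abs_mul]
    calc |g ω| * |X ω i| ≤ |g ω| * M' :=
          mul_le_mul_of_nonneg_left (hXM' ω i) (abs_nonneg _)
      _ = M' * |g ω| := mul_comm _ _
  -- helper: integrability of g • X
  have hXnorm : ∀ ω, ‖X ω‖ ≤ M' := fun ω =>
    (pi_norm_le_iff_of_nonneg hM'0).mpr fun i => by rw [Real.norm_eq_abs]; exact hXM' ω i
  have hvec : ∀ (g : Ω → ℝ), Measurable g → Integrable g P →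
      Integrable (fun ω => g ω • X ω) P := by
    intro g hgm hgint
    refine (hgint.abs.const_mul M').mono' (hgm.smul hX).aestronglyMeasurable
      (ae_of_all _ fun ω => ?_)
    rw [norm_smul, Real.norm_eq_abs]
    calc |g ω| * ‖X ω‖ ≤ |g ω| * M' :=
          mul_le_mul_of_nonneg_left (hXnorm ω) (abs_nonneg _)
      _ = M' * |g ω| := mul_comm _ _
  -- helper: components of a vector integral
  have happly : ∀ (F : Ω → (Fin p → ℝ)), Integrable F P → ∀ i : Fin p,
      (∫ ω, F ω ∂P) i = ∫ ω, F ω i ∂P := by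
    intro F hF i
    have := (ContinuousLinearMap.proj (R := ℝ) (φ := fun _ : Fin p => ℝ) i).integral_comp_comm hF
    simpa using this.symm
  -- the three scalar weights
  have hg1m : Measurable (fun ω =>
      Δ ω / G (T ω, X ω) * (Real.log (T ω) - ∑ j, X ω j * β₀ j)) :=
    (hΔm.div hGTXm).mul hrm
  have hg1int : Integrable (fun ω =>
      Δ ω / G (T ω, X ω) * (Real.log (T ω) - ∑ j, X ω j * β₀ j)) P := by
    refine (hrint.abs.const_mul δ⁻¹).mono' hg1m.aestronglyMeasurable ?_
    filter_upwards [hGbound] with ω hω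
    have hGpos : 0 < G (T ω, X ω) := lt_of_lt_of_le hδ hω.1
    rw [Real.norm_eq_abs, abs_mul, abs_div]
    have h1 : |Δ ω| / |G (T ω, X ω)| ≤ 1 / δ := by
      rw [abs_of_pos hGpos]
      exact div_le_div₀ zero_le_one (hΔbd ω) hδ hω.1
    calc |Δ ω| / |G (T ω, X ω)| * |Real.log (T ω) - ∑ j, X ω j * β₀ j|
        ≤ 1 / δ * |Real.log (T ω) - ∑ j, X ω j * β₀ j| :=
          mul_le_mul_of_nonneg_right h1 (abs_nonneg _)
      _ = δ⁻¹ * |Real.log (T ω) - ∑ j, X ω j * β₀ j| := by rw [one_div]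
  have hφm : Measurable (fun b : Fin (K + 1) => if b = a then (1 : ℝ) else 0) :=
    measurable_of_countable _
  have hindAm : Measurable (fun ω => if A ω = a then (1 : ℝ) else 0) := hφm.comp hA
  have hindAbd : ∀ ω, |(if A ω = a then (1 : ℝ) else 0)| ≤ 1 := fun ω => by split <;> simp
  have hg2m : Measurable (fun ω =>
      c₁ * (if A ω = a then (1 : ℝ) else 0) / κ * (f (X ω) - ∑ j, X ω j * β₀ j)) :=
    ((hindAm.const_mul c₁).div_const κ).mul hsm
  have hg2int : Integrable (fun ω =>
      c₁ * (if A ω = a then (1 : ℝ) else 0) / κ * (f (X ω) - ∑ j, X ω j * β₀ j)) P := by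
    refine hsint.bdd_mul (c := |c₁| / κ) ((hindAm.const_mul c₁).div_const κ).aestronglyMeasurable
      (ae_of_all _ fun ω => ?_)
    rw [Real.norm_eq_abs, abs_div, abs_of_pos hκpos]
    refine div_le_div_of_nonneg_right ?_ hκpos.le
    rw [abs_mul]
    calc |c₁| * |(if A ω = a then (1 : ℝ) else 0)| ≤ |c₁| * 1 :=
          mul_le_mul_of_nonneg_left (hindAbd ω) (abs_nonneg _)
      _ = |c₁| := mul_one _
  have hindA'm : Measurable (fun ω => if A ω = a then (0 : ℝ) else 1) :=
    (measurable_of_countable (fun b : Fin (K + 1) => if b = a then (0 : ℝ) else 1)).comp hA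
  have hindA'bd : ∀ ω, |(if A ω = a then (0 : ℝ) else 1)| ≤ 1 := fun ω => by split <;> simp
  have hg3m : Measurable (fun ω =>
      c₂ * (if A ω = a then (0 : ℝ) else 1) / (1 - κ) * (f (X ω) - ∑ j, X ω j * β₀ j)) :=
    ((hindA'm.const_mul c₂).div_const (1 - κ)).mul hsm
  have h1κ : (0 : ℝ) < 1 - κ := by linarith
  have hg3int : Integrable (fun ω =>
      c₂ * (if A ω = a then (0 : ℝ) else 1) / (1 - κ) * (f (X ω) - ∑ j, X ω j * β₀ j)) P := by
    refine hsint.bdd_mul (c := |c₂| / (1 - κ)) ((hindA'm.const_mul c₂).div_const (1 - κ)).aestronglyMeasurable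
      (ae_of_all _ fun ω => ?_)
    rw [Real.norm_eq_abs, abs_div, abs_of_pos h1κ]
    refine div_le_div_of_nonneg_right ?_ h1κ.le
    rw [abs_mul]
    calc |c₂| * |(if A ω = a then (0 : ℝ) else 1)| ≤ |c₂| * 1 :=
          mul_le_mul_of_nonneg_left (hindA'bd ω) (abs_nonneg _)
      _ = |c₂| := mul_one _
  -- integrabilities of the three vector terms
  have hT1int : Integrable (fun ω =>
      (Δ ω / G (T ω, X ω) * (Real.log (T ω) - ∑ j, X ω j * β₀ j)) • X ω) P :=
    hvec _ hg1m hg1int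
  have hT2int : Integrable (fun ω =>
      (c₁ * (if A ω = a then (1 : ℝ) else 0) / κ * (f (X ω) - ∑ j, X ω j * β₀ j)) • X ω) P :=
    hvec _ hg2m hg2int
  have hT3int : Integrable (fun ω =>
      (c₂ * (if A ω = a then (0 : ℝ) else 1) / (1 - κ) * (f (X ω) - ∑ j, X ω j * β₀ j)) • X ω) P :=
    hvec _ hg3m hg3int
  have hsXint : Integrable (fun ω => (f (X ω) - ∑ j, X ω j * β₀ j) • X ω) P := hvec _ hsm hsint
  -- pointwise identification of the integrand
  have hpt : ∀ ω,
      ((Δ ω / G (Y ω, X ω)) • ((Real.log (Y ω) - ∑ i, X ω i * β₀ i) • X ω)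
          + (c₁ * (if A ω = a then (1 : ℝ) else 0) / κ) •
              ((f (X ω) - ∑ i, X ω i * β₀ i) • X ω)
          + (c₂ * (if A ω = a then (0 : ℝ) else 1) / (1 - κ)) •
              ((f (X ω) - ∑ i, X ω i * β₀ i) • X ω))
      = (Δ ω / G (T ω, X ω) * (Real.log (T ω) - ∑ j, X ω j * β₀ j)) • X ω
        + (c₁ * (if A ω = a then (1 : ℝ) else 0) / κ * (f (X ω) - ∑ j, X ω j * β₀ j)) • X ω
        + (c₂ * (if A ω = a then (0 : ℝ) else 1) / (1 - κ) * (f (X ω) - ∑ j, X ω j * β₀ j)) • X ω := by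
    intro ω
    by_cases h : T ω ≤ C ω
    · rw [hY ω, min_eq_left h]
      simp only [smul_smul]
    · rw [hΔ ω, if_neg h]
      simp only [zero_div, zero_mul, zero_smul, smul_smul]
  -- the key computation for the IPCW term
  have key1 : ∫ ω, (Δ ω / G (T ω, X ω) * (Real.log (T ω) - ∑ j, X ω j * β₀ j)) • X ω ∂P
      = 0 := by
    funext i
    rw [happly _ hT1int i, Pi.zero_apply]
    have hXim : Measurable (fun ω => X ω i) := (measurable_pi_apply i).comp hX
    -- the m-measurable weight
    set W : Ω → ℝ := fun ω =>
      (Real.log (T ω) - ∑ j, X ω j * β₀ j) * X ω i / G (T ω, X ω) with hWdef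
    have hφW : Measurable (fun q : ℝ × (Fin p → ℝ) =>
        (Real.log q.1 - ∑ j, q.2 j * β₀ j) * q.2 i / G q) :=
      (((Real.measurable_log.comp measurable_fst).sub
        (Finset.measurable_sum _ fun j _ =>
          ((measurable_pi_apply j).comp measurable_snd).mul_const _)).mul
        ((measurable_pi_apply i).comp measurable_snd)).div hG
    have hWm0 : Measurable W := hφW.comp hTX
    have hWmm : StronglyMeasurable[MeasurableSpace.comap (fun ω => (T ω, X ω)) inferInstance]
        W := by
      have hcm : Measurable[MeasurableSpace.comap (fun ω => (T ω, X ω)) inferInstance]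
          (fun ω => (T ω, X ω)) := measurable_iff_comap_le.mpr le_rfl
      exact (hφW.comp hcm).stronglyMeasurable
    have hWΔint : Integrable (W * Δ) P := by
      refine ((hrint.abs.const_mul (M' / δ)).mono')
        ((hWm0.mul hΔm).aestronglyMeasurable) ?_
      filter_upwards [hGbound] with ω hω
      have hGpos : 0 < G (T ω, X ω) := lt_of_lt_of_le hδ hω.1
      simp only [Pi.mul_apply, Real.norm_eq_abs, hWdef]
      calc |((Real.log (T ω) - ∑ j, X ω j * β₀ j) * X ω i / G (T ω, X ω)) * Δ ω|
          ≤ |(Real.log (T ω) - ∑ j, X ω j * β₀ j) * X ω i / G (T ω, X ω)| := by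
            rw [abs_mul]
            exact mul_le_of_le_one_right (abs_nonneg _) (hΔbd ω)
        _ = |(Real.log (T ω) - ∑ j, X ω j * β₀ j) * X ω i| / G (T ω, X ω) := by
            rw [abs_div, abs_of_pos hGpos]
        _ ≤ |Real.log (T ω) - ∑ j, X ω j * β₀ j| * M' / δ := by
            refine div_le_div₀ (mul_nonneg (abs_nonneg _) hM'0) ?_ hδ hω.1
            rw [abs_mul]
            exact mul_le_mul_of_nonneg_left (hXM' ω i) (abs_nonneg _)
        _ = M' / δ * |Real.log (T ω) - ∑ j, X ω j * β₀ j| := by ring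
    -- step 0: rewrite as W * Δ
    have hmain : ∫ ω, (Δ ω / G (T ω, X ω) * (Real.log (T ω) - ∑ j, X ω j * β₀ j)) • X ω i ∂P
        = ∫ ω, (W * Δ) ω ∂P := by
      refine integral_congr_ae (ae_of_all _ fun ω => ?_)
      simp only [Pi.mul_apply, hWdef, smul_eq_mul]
      ring
    -- step 1: conditioning
    have hpull := condExp_mul_of_stronglyMeasurable_left (μ := P) hWmm hWΔint hΔint
    have hstep1 : ∫ ω, (W * Δ) ω ∂P = ∫ ω, (W * P[Δ|MeasurableSpace.comap (fun ω => (T ω, X ω)) inferInstance]) ω ∂P := by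
      rw [← integral_condExp hm (f := W * Δ)]
      exact integral_congr_ae hpull
    -- step 2: identify the conditional expectation with G
    have hstep2 : ∫ ω, (W * P[Δ|MeasurableSpace.comap (fun ω => (T ω, X ω)) inferInstance]) ω ∂P = ∫ ω, W ω * G (T ω, X ω) ∂P := by
      refine integral_congr_ae ?_
      filter_upwards [hGcond] with ω h
      simp only [Pi.mul_apply]
      rw [← h]
    -- step 3: cancel G
    have hstep3 : ∫ ω, W ω * G (T ω, X ω) ∂P
        = ∫ ω, (Real.log (T ω) - ∑ j, X ω j * β₀ j) * X ω i ∂P := by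
      refine integral_congr_ae ?_
      filter_upwards [hGbound] with ω h
      have hGne : G (T ω, X ω) ≠ 0 := (lt_of_lt_of_le hδ h.1).ne'
      simp only [hWdef]
      rw [div_mul_cancel₀ _ hGne]
    -- step 4: compute the remaining integral
    have hXiXjint : ∀ j, Integrable (fun ω => X ω i * X ω j) P := by
      intro j
      refine (integrable_const (M' * M')).mono'
        (hXim.mul ((measurable_pi_apply j).comp hX)).aestronglyMeasurable
        (ae_of_all _ fun ω => ?_)
      rw [Real.norm_eq_abs, abs_mul]
      exact mul_le_mul (hXM' ω i) (hXM' ω j) (abs_nonneg _) hM'0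
    have hXlogint : Integrable (fun ω => X ω i * Real.log (T ω)) P :=
      (hcomp _ (Real.measurable_log.comp hT) hlogT i).congr
        (ae_of_all _ fun ω => mul_comm _ _)
    have hstep4 : ∫ ω, (Real.log (T ω) - ∑ j, X ω j * β₀ j) * X ω i ∂P
        = (∫ ω, X ω i * Real.log (T ω) ∂P) - ∑ j, (∫ ω, X ω i * X ω j ∂P) * β₀ j := by
      have e : (fun ω => (Real.log (T ω) - ∑ j, X ω j * β₀ j) * X ω i)
          = fun ω => X ω i * Real.log (T ω) - ∑ j, (X ω i * X ω j) * β₀ j := by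
        funext ω
        rw [sub_mul, Finset.sum_mul, mul_comm]
        congr 1
        exact Finset.sum_congr rfl fun j _ => by ring
      rw [e, integral_sub hXlogint
        (integrable_finset_sum _ fun j _ => (hXiXjint j).mul_const _),
        integral_finset_sum _ fun j _ => (hXiXjint j).mul_const _]
      congr 1
      exact Finset.sum_congr rfl fun j _ => integral_mul_const _ _
    -- step 5: linear algebra
    have hSv : Sig.mulVec β₀ = v := by
      rw [hβ₀, Matrix.mulVec_mulVec,
        Matrix.mul_nonsing_inv _ ((Matrix.isUnit_iff_isUnit_det Sig).mp hSigInv),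
        Matrix.one_mulVec]
    have hsum : ∑ j, Sig i j * β₀ j = v i := by
      have := congrFun hSv i
      simpa [Matrix.mulVec, dotProduct] using this
    have hstep5 : (∫ ω, X ω i * Real.log (T ω) ∂P)
        - ∑ j, (∫ ω, X ω i * X ω j ∂P) * β₀ j = 0 := by
      rw [← hv i]
      have : ∑ j, (∫ ω, X ω i * X ω j ∂P) * β₀ j = ∑ j, Sig i j * β₀ j :=
        Finset.sum_congr rfl fun j _ => by rw [hSig i j]
      rw [this, hsum, sub_self]
    calc ∫ ω, (Δ ω / G (T ω, X ω) * (Real.log (T ω) - ∑ j, X ω j * β₀ j)) • X ω i ∂P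
        = ∫ ω, (W * Δ) ω ∂P := hmain
      _ = ∫ ω, (W * P[Δ|MeasurableSpace.comap (fun ω => (T ω, X ω)) inferInstance]) ω ∂P := hstep1
      _ = ∫ ω, W ω * G (T ω, X ω) ∂P := hstep2
      _ = ∫ ω, (Real.log (T ω) - ∑ j, X ω j * β₀ j) * X ω i ∂P := hstep3
      _ = (∫ ω, X ω i * Real.log (T ω) ∂P) - ∑ j, (∫ ω, X ω i * X ω j ∂P) * β₀ j := hstep4
      _ = 0 := hstep5
  -- expectations of the treatment indicators
  have hindAint : Integrable (fun ω => if A ω = a then (1 : ℝ) else 0) P :=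
    (integrable_const 1).mono' hindAm.aestronglyMeasurable
      (ae_of_all _ fun ω => by simpa [Real.norm_eq_abs] using hindAbd ω)
  have hEind : ∫ ω, (if A ω = a then (1 : ℝ) else 0) ∂P = κ := by
    have e : (fun ω => if A ω = a then (1 : ℝ) else 0) = (A ⁻¹' {a}).indicator 1 := by
      funext ω
      by_cases h : A ω = a <;> simp [Set.indicator_apply, Set.mem_preimage, h]
    rw [e, integral_indicator_one (hA (measurableSet_singleton a)), hκ]
    have epre : A ⁻¹' {a} = {ω | A ω = a} := by ext ω; simp
    rw [epre]
    rfl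
  have hEind' : ∫ ω, (if A ω = a then (0 : ℝ) else 1) ∂P = 1 - κ := by
    have e : (fun ω => if A ω = a then (0 : ℝ) else 1)
        = fun ω => 1 - (if A ω = a then (1 : ℝ) else 0) := by
      funext ω; by_cases h : A ω = a <;> simp [h]
    rw [e, integral_sub (integrable_const 1) hindAint, hEind]
    simp
  -- the independence computation for the prediction terms
  have keyI : ∀ i : Fin p,
      ∫ ω, (if A ω = a then (1 : ℝ) else 0) * ((f (X ω) - ∑ j, X ω j * β₀ j) * X ω i) ∂P
        = κ * ∫ ω, (f (X ω) - ∑ j, X ω j * β₀ j) * X ω i ∂P := by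
    intro i
    have hψm : Measurable (fun x : Fin p → ℝ => (f x - ∑ j, x j * β₀ j) * x i) :=
      (hf.sub (Finset.measurable_sum _ fun j _ => (measurable_pi_apply j).mul_const _)).mul
        (measurable_pi_apply i)
    have hψint : Integrable (fun ω => (f (X ω) - ∑ j, X ω j * β₀ j) * X ω i) P :=
      hcomp _ hsm hsint i
    have hmul :
        ∫ ω, (if A ω = a then (1 : ℝ) else 0) * ((f (X ω) - ∑ j, X ω j * β₀ j) * X ω i) ∂P
        = (∫ ω, (if A ω = a then (1 : ℝ) else 0) ∂P)
          * ∫ ω, (f (X ω) - ∑ j, X ω j * β₀ j) * X ω i ∂P :=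
      (hindep.comp hφm hψm).integral_mul_eq_mul_integral hindAm.aestronglyMeasurable
        hψint.aestronglyMeasurable
    rw [hmul, hEind]
  have keyI' : ∀ i : Fin p,
      ∫ ω, (if A ω = a then (0 : ℝ) else 1) * ((f (X ω) - ∑ j, X ω j * β₀ j) * X ω i) ∂P
        = (1 - κ) * ∫ ω, (f (X ω) - ∑ j, X ω j * β₀ j) * X ω i ∂P := by
    intro i
    have hψm : Measurable (fun x : Fin p → ℝ => (f x - ∑ j, x j * β₀ j) * x i) :=
      (hf.sub (Finset.measurable_sum _ fun j _ => (measurable_pi_apply j).mul_const _)).mul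
        (measurable_pi_apply i)
    have hψint : Integrable (fun ω => (f (X ω) - ∑ j, X ω j * β₀ j) * X ω i) P :=
      hcomp _ hsm hsint i
    have hφ'm : Measurable (fun b : Fin (K + 1) => if b = a then (0 : ℝ) else 1) :=
      measurable_of_countable _
    have hmul :
        ∫ ω, (if A ω = a then (0 : ℝ) else 1) * ((f (X ω) - ∑ j, X ω j * β₀ j) * X ω i) ∂P
        = (∫ ω, (if A ω = a then (0 : ℝ) else 1) ∂P)
          * ∫ ω, (f (X ω) - ∑ j, X ω j * β₀ j) * X ω i ∂P :=
      (hindep.comp hφ'm hψm).integral_mul_eq_mul_integral hindA'm.aestronglyMeasurable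
        hψint.aestronglyMeasurable
    rw [hmul, hEind']
  -- the prediction terms
  have key2 : ∫ ω, (c₁ * (if A ω = a then (1 : ℝ) else 0) / κ
        * (f (X ω) - ∑ j, X ω j * β₀ j)) • X ω ∂P
      = c₁ • ∫ ω, (f (X ω) - ∑ j, X ω j * β₀ j) • X ω ∂P := by
    funext i
    rw [happly _ hT2int i, Pi.smul_apply, happly _ hsXint i, smul_eq_mul]
    have e : (fun ω => ((c₁ * (if A ω = a then (1 : ℝ) else 0) / κ
          * (f (X ω) - ∑ j, X ω j * β₀ j)) • X ω) i)
        = fun ω => (c₁ / κ)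
            * ((if A ω = a then (1 : ℝ) else 0) * ((f (X ω) - ∑ j, X ω j * β₀ j) * X ω i)) := by
      funext ω
      simp only [Pi.smul_apply, smul_eq_mul]
      ring
    rw [e, integral_const_mul, keyI i]
    have e2 : (fun ω => ((f (X ω) - ∑ j, X ω j * β₀ j) • X ω) i)
        = fun ω => (f (X ω) - ∑ j, X ω j * β₀ j) * X ω i := by
      funext ω; simp [Pi.smul_apply, smul_eq_mul]
    rw [e2, ← mul_assoc, div_mul_cancel₀ _ hκpos.ne']
  have key3 : ∫ ω, (c₂ * (if A ω = a then (0 : ℝ) else 1) / (1 - κ)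
        * (f (X ω) - ∑ j, X ω j * β₀ j)) • X ω ∂P
      = c₂ • ∫ ω, (f (X ω) - ∑ j, X ω j * β₀ j) • X ω ∂P := by
    funext i
    rw [happly _ hT3int i, Pi.smul_apply, happly _ hsXint i, smul_eq_mul]
    have e : (fun ω => ((c₂ * (if A ω = a then (0 : ℝ) else 1) / (1 - κ)
          * (f (X ω) - ∑ j, X ω j * β₀ j)) • X ω) i)
        = fun ω => (c₂ / (1 - κ))
            * ((if A ω = a then (0 : ℝ) else 1) * ((f (X ω) - ∑ j, X ω j * β₀ j) * X ω i)) := by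
      funext ω
      simp only [Pi.smul_apply, smul_eq_mul]
      ring
    rw [e, integral_const_mul, keyI' i]
    have e2 : (fun ω => ((f (X ω) - ∑ j, X ω j * β₀ j) • X ω) i)
        = fun ω => (f (X ω) - ∑ j, X ω j * β₀ j) * X ω i := by
      funext ω; simp [Pi.smul_apply, smul_eq_mul]
    rw [e2, ← mul_assoc, div_mul_cancel₀ _ h1κ.ne']
  -- assemble
  calc ∫ ω, ((Δ ω / G (Y ω, X ω)) • ((Real.log (Y ω) - ∑ i, X ω i * β₀ i) • X ω)
          + (c₁ * (if A ω = a then (1 : ℝ) else 0) / κ) •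
              ((f (X ω) - ∑ i, X ω i * β₀ i) • X ω)
          + (c₂ * (if A ω = a then (0 : ℝ) else 1) / (1 - κ)) •
              ((f (X ω) - ∑ i, X ω i * β₀ i) • X ω)) ∂P
      = ∫ ω, ((Δ ω / G (T ω, X ω) * (Real.log (T ω) - ∑ j, X ω j * β₀ j)) • X ω
          + (c₁ * (if A ω = a then (1 : ℝ) else 0) / κ
              * (f (X ω) - ∑ j, X ω j * β₀ j)) • X ω
          + (c₂ * (if A ω = a then (0 : ℝ) else 1) / (1 - κ)
              * (f (X ω) - ∑ j, X ω j * β₀ j)) • X ω) ∂P :=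
        integral_congr_ae (ae_of_all _ hpt)
    _ = (∫ ω, (Δ ω / G (T ω, X ω) * (Real.log (T ω) - ∑ j, X ω j * β₀ j)) • X ω ∂P)
        + (∫ ω, (c₁ * (if A ω = a then (1 : ℝ) else 0) / κ
            * (f (X ω) - ∑ j, X ω j * β₀ j)) • X ω ∂P)
        + (∫ ω, (c₂ * (if A ω = a then (0 : ℝ) else 1) / (1 - κ)
            * (f (X ω) - ∑ j, X ω j * β₀ j)) • X ω ∂P) := by
        have e1 : ∫ ω, (((Δ ω / G (T ω, X ω) * (Real.log (T ω) - ∑ j, X ω j * β₀ j)) • X ω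
              + (c₁ * (if A ω = a then (1 : ℝ) else 0) / κ
                  * (f (X ω) - ∑ j, X ω j * β₀ j)) • X ω)
              + (c₂ * (if A ω = a then (0 : ℝ) else 1) / (1 - κ)
                  * (f (X ω) - ∑ j, X ω j * β₀ j)) • X ω) ∂P
            = (∫ ω, ((Δ ω / G (T ω, X ω) * (Real.log (T ω) - ∑ j, X ω j * β₀ j)) • X ω
              + (c₁ * (if A ω = a then (1 : ℝ) else 0) / κ
                  * (f (X ω) - ∑ j, X ω j * β₀ j)) • X ω) ∂P)
              + ∫ ω, (c₂ * (if A ω = a then (0 : ℝ) else 1) / (1 - κ)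
                  * (f (X ω) - ∑ j, X ω j * β₀ j)) • X ω ∂P :=
          integral_add (hT1int.add hT2int) hT3int
        have e2 : ∫ ω, ((Δ ω / G (T ω, X ω) * (Real.log (T ω) - ∑ j, X ω j * β₀ j)) • X ω
              + (c₁ * (if A ω = a then (1 : ℝ) else 0) / κ
                  * (f (X ω) - ∑ j, X ω j * β₀ j)) • X ω) ∂P
            = (∫ ω, (Δ ω / G (T ω, X ω) * (Real.log (T ω) - ∑ j, X ω j * β₀ j)) • X ω ∂P)
              + ∫ ω, (c₁ * (if A ω = a then (1 : ℝ) else 0) / κ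
                  * (f (X ω) - ∑ j, X ω j * β₀ j)) • X ω ∂P :=
          integral_add hT1int hT2int
        rw [e1, e2]
    _ = 0 := by
        rw [key1, key2, key3, zero_add, ← add_smul, hc, zero_smul]
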